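/- arXiv:1609.08645 — 2 statements merged into one kernel-verified Lean document; each statement's English description precedes it below -/
import Mathlib

section
/- Let G be a claw-free graph with clique number ω ≥ 3, and suppose G has a stable (independent) set of size 3 and every vertex has degree at most 4(ω − 1). Let v be a vertex whose second neighborhood N²(v) is nonempty, and suppose every vertex of N²(v) has at least k ≥ 2(ω−1)+1 neighbors in N(v). Then the square degree of v satisfies deg_{G²}(v) < 6(ω − 1). -/
open SimpleGraph Finset

variable {V : Type*}

/-- A graph is claw-free if it has no induced `K_{1,3}`. -/
def ClawFree (G : SimpleGraph V) : Prop :=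
  ∀ v a b c : V, G.Adj v a → G.Adj v b → G.Adj v c →
    a ≠ b → a ≠ c → b ≠ c → G.Adj a b ∨ G.Adj a c ∨ G.Adj b c

/-- The square of a graph: join distinct vertices at distance at most 2. -/
def square (G : SimpleGraph V) : SimpleGraph V where
  Adj u w := u ≠ w ∧ (G.Adj u w ∨ ∃ x, G.Adj u x ∧ G.Adj x w)
  symm := by
    constructor
    rintro u w ⟨h1, h2⟩
    refine ⟨h1.symm, ?_⟩
    rcases h2 with h | ⟨x, hx1, hx2⟩
    · exact Or.inl h.symm
    · exact Or.inr ⟨x, hx2.symm, hx1.symm⟩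
  loopless := ⟨fun u h => h.1 rfl⟩

/-- The second neighbourhood of `v` : vertices at distance exactly two from `v`. -/
def secondNbhd (G : SimpleGraph V) (v : V) : Set V :=
  {w | w ≠ v ∧ ¬G.Adj v w ∧ ∃ x, G.Adj v x ∧ G.Adj x w}

/-- The square degree of a vertex. -/
noncomputable def sqDeg (G : SimpleGraph V) (v : V) : ℕ :=
  ((square G).neighborSet v).ncard

theorem stmt_4 [Fintype V] (G : SimpleGraph V) (hG : ClawFree G)
    (hω : 3 ≤ G.cliqueNum)
    (hstable : ∃ a b c : V, a ≠ b ∧ a ≠ c ∧ b ≠ c ∧ ¬G.Adj a b ∧ ¬G.Adj a c ∧ ¬G.Adj b c)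
    (hdeg : ∀ u : V, (G.neighborSet u).ncard ≤ 4 * (G.cliqueNum - 1))
    (v : V) (hN2 : (secondNbhd G v).Nonempty)
    (k : ℕ) (hk : 2 * (G.cliqueNum - 1) + 1 ≤ k)
    (hmin : ∀ w ∈ secondNbhd G v, k ≤ Set.ncard {u | G.Adj v u ∧ G.Adj u w}) :
    sqDeg G v < 6 * (G.cliqueNum - 1) := by
  classical
  set m := G.cliqueNum - 1 with hm
  have hm2 : 2 ≤ m := by omega
  set Nv := G.neighborFinset v with hNvdef
  set N2 : Finset V := Finset.univ.filter (fun w => w ∈ secondNbhd G v) with hN2def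
  have memN2 : ∀ w, w ∈ N2 ↔ w ∈ secondNbhd G v := by
    intro w; simp [hN2def]
  have memNv : ∀ u, u ∈ Nv ↔ G.Adj v u := by
    intro u; simp [hNvdef]
  -- Step 1 : neighbours of u ∈ N(v) inside N²(v) form a clique, hence ≤ m of them
  have step1 : ∀ u ∈ Nv, (N2.filter (fun w => G.Adj u w)).card ≤ m := by
    intro u hu
    have huv : G.Adj v u := (memNv u).1 hu
    have hclique : G.IsClique (↑(insert u (N2.filter (fun w => G.Adj u w))) : Set V) := by
      intro a ha b hb hab
      simp only [Finset.coe_insert, Set.mem_insert_iff, Finset.mem_coe,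
        Finset.mem_filter] at ha hb
      rcases ha with rfl | ⟨haN2, hua⟩
      · rcases hb with rfl | ⟨hbN2, hub⟩
        · exact absurd rfl hab
        · exact hub
      · rcases hb with rfl | ⟨hbN2, hub⟩
        · exact hua.symm
        · have ha2 := (memN2 a).1 haN2
          have hb2 := (memN2 b).1 hbN2
          have hva : v ≠ a := fun h => ha2.1 h.symm
          have hvb : v ≠ b := fun h => hb2.1 h.symm
          rcases hG u v a b huv.symm hua hub hva hvb hab with h | h | h
          · exact absurd h ha2.2.1
          · exact absurd h hb2.2.1
          · exact h
    have hunot : u ∉ N2.filter (fun w => G.Adj u w) := by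
      intro h
      have := (memN2 u).1 (Finset.mem_filter.1 h).1
      exact this.2.1 huv
    have hcard := hclique.card_le_cliqueNum
    rw [Finset.card_insert_of_notMem hunot] at hcard
    omega
  -- Step 2 : each w ∈ N²(v) has at least k neighbours in N(v)
  have step2 : ∀ w ∈ N2, k ≤ (Nv.filter (fun u => G.Adj u w)).card := by
    intro w hw
    have hw2 := (memN2 w).1 hw
    have hset : {u | G.Adj v u ∧ G.Adj u w} = ↑(Nv.filter (fun u => G.Adj u w)) := by
      ext u; simp [memNv, hNvdef]
    have := hmin w hw2
    rwa [hset, Set.ncard_coe_finset] at this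
  -- Double counting
  have hdc : ∑ w ∈ N2, (Nv.filter (fun u => G.Adj u w)).card
      = ∑ u ∈ Nv, (N2.filter (fun w => G.Adj u w)).card := by
    simp_rw [Finset.card_filter]
    exact Finset.sum_comm
  have hlow : k * N2.card ≤ ∑ w ∈ N2, (Nv.filter (fun u => G.Adj u w)).card := by
    calc k * N2.card = N2.card * k := Nat.mul_comm _ _
    _ ≤ ∑ w ∈ N2, (Nv.filter (fun u => G.Adj u w)).card := by
        simpa using Finset.card_nsmul_le_sum N2 _ k step2
  have hNvcard : Nv.card ≤ 4 * m := by
    have : (G.neighborSet v).ncard = Nv.card := by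
      rw [hNvdef, neighborFinset_def, Set.ncard_eq_toFinset_card']
    rw [← this]; exact hdeg v
  have hhigh : ∑ u ∈ Nv, (N2.filter (fun w => G.Adj u w)).card ≤ 4 * m * m := by
    calc ∑ u ∈ Nv, (N2.filter (fun w => G.Adj u w)).card ≤ Nv.card * m := by
          simpa using Finset.sum_le_card_nsmul Nv _ m step1
    _ ≤ 4 * m * m := Nat.mul_le_mul_right m hNvcard
  have hkey : (2 * m + 1) * N2.card ≤ 4 * m * m := by
    calc (2 * m + 1) * N2.card ≤ k * N2.card := Nat.mul_le_mul_right _ hk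
    _ ≤ ∑ w ∈ N2, (Nv.filter (fun u => G.Adj u w)).card := hlow
    _ = _ := hdc
    _ ≤ 4 * m * m := hhigh
  have hN2card : N2.card < 2 * m := by nlinarith
  -- The square neighbourhood is Nv ∪ N2
  have hset : (square G).neighborSet v = ↑(Nv ∪ N2) := by
    ext w
    constructor
    · rintro ⟨hne, h | ⟨x, hx1, hx2⟩⟩
      · exact Finset.mem_coe.2 (Finset.mem_union.2 (Or.inl ((memNv w).2 h)))
      · by_cases hvw : G.Adj v w
        · exact Finset.mem_coe.2 (Finset.mem_union.2 (Or.inl ((memNv w).2 hvw)))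
        · exact Finset.mem_coe.2 (Finset.mem_union.2 (Or.inr ((memN2 w).2
            ⟨fun h' => hne h'.symm, hvw, x, hx1, hx2⟩)))
    · intro hw
      rcases Finset.mem_union.1 (Finset.mem_coe.1 hw) with h | h
      · have := (memNv w).1 h
        exact ⟨this.ne, Or.inl this⟩
      · have h2 := (memN2 w).1 h
        exact ⟨fun h' => h2.1 h'.symm, Or.inr h2.2.2⟩
  have : sqDeg G v = (Nv ∪ N2).card := by
    rw [sqDeg, hset, Set.ncard_coe_finset]
  rw [this]
  have := Finset.card_union_le Nv N2
  omega
end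

section
/- Let G be a claw-free graph with clique number ω, v a vertex of G, and suppose every vertex of the second neighborhood N²(v) has at least k ≥ 1 neighbors in N(v). Then |N²(v)| ≤ (ω − 1)·deg(v)/k, and consequently deg_{G²}(v) ≤ (1 + (ω − 1)/k)·deg(v). -/
open SimpleGraph Finset

variable {V : Type*}

theorem stmt_5 [Fintype V] (G : SimpleGraph V) (hG : ClawFree G) (v : V)
    (k : ℕ) (hk : 1 ≤ k)
    (hmin : ∀ w ∈ secondNbhd G v, k ≤ Set.ncard {u | G.Adj v u ∧ G.Adj u w}) :
    ((secondNbhd G v).ncard : ℝ) ≤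
        ((G.cliqueNum : ℝ) - 1) * (G.neighborSet v).ncard / k ∧
      (sqDeg G v : ℝ) ≤
        (1 + ((G.cliqueNum : ℝ) - 1) / k) * (G.neighborSet v).ncard := by
  classical
  set A : Finset V := Finset.univ.filter (fun u => G.Adj v u) with hA
  set B : Finset V := Finset.univ.filter (fun w => w ∈ secondNbhd G v) with hB
  have hAset : G.neighborSet v = ↑A := by
    ext u; simp [hA, neighborSet]
  have hBset : secondNbhd G v = ↑B := by
    ext w; simp [hB]
  have hAcard : (G.neighborSet v).ncard = A.card := by
    rw [hAset, Set.ncard_coe_finset]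
  have hBcard : (secondNbhd G v).ncard = B.card := by
    rw [hBset, Set.ncard_coe_finset]
  -- clique number ≥ 1
  have hω : 1 ≤ G.cliqueNum := by
    have : ({v} : Finset V).card ≤ G.cliqueNum :=
      IsClique.card_le_cliqueNum (tc := by simp)
    simpa using this
  -- key per-u bound
  have hu : ∀ u ∈ A, (B.filter (fun w => G.Adj u w)).card ≤ G.cliqueNum - 1 := by
    intro u huA
    have hvu : G.Adj v u := by simpa [hA] using huA
    set C := B.filter (fun w => G.Adj u w) with hC
    have hclique : G.IsClique (↑(insert u C) : Set V) := by
      intro a ha b hb hab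
      simp only [coe_insert, Set.mem_insert_iff, mem_coe, hC, mem_filter] at ha hb
      rcases ha with rfl | ⟨haB, hau⟩
      · rcases hb with rfl | ⟨hbB, hbu⟩
        · exact absurd rfl hab
        · exact hbu
      · rcases hb with rfl | ⟨hbB, hbu⟩
        · exact hau.symm
        · -- a, b ∈ B adjacent to u; claw at u with v, a, b
          have haS : a ∈ secondNbhd G v := by simpa [hB] using haB
          have hbS : b ∈ secondNbhd G v := by simpa [hB] using hbB
          have hva : v ≠ a := fun h => haS.1 h.symm
          have hvb : v ≠ b := fun h => hbS.1 h.symm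
          rcases hG u v a b hvu.symm hau hbu hva hvb hab with h | h | h
          · exact absurd h haS.2.1
          · exact absurd h hbS.2.1
          · exact h
    have hcard : (insert u C).card ≤ G.cliqueNum :=
      IsClique.card_le_cliqueNum (tc := hclique)
    have huC : u ∉ C := by
      intro h
      have : u ∈ secondNbhd G v := by
        have := (mem_filter.mp h).1; simpa [hB] using this
      exact this.2.1 hvu
    rw [Finset.card_insert_of_notMem huC] at hcard
    omega
  -- double counting
  have key : k * B.card ≤ (G.cliqueNum - 1) * A.card := by
    calc k * B.card = ∑ _w ∈ B, k := by rw [Finset.sum_const, smul_eq_mul, mul_comm]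
    _ ≤ ∑ w ∈ B, (A.filter (fun u => G.Adj u w)).card := by
        apply Finset.sum_le_sum
        intro w hw
        have hwS : w ∈ secondNbhd G v := by simpa [hB] using hw
        have := hmin w hwS
        have hset : {u | G.Adj v u ∧ G.Adj u w} = ↑(A.filter (fun u => G.Adj u w)) := by
          ext u; simp [hA]
        rwa [hset, Set.ncard_coe_finset] at this
    _ = ∑ u ∈ A, (B.filter (fun w => G.Adj u w)).card := by
        simp only [Finset.card_filter]
        exact Finset.sum_comm
    _ ≤ ∑ _u ∈ A, (G.cliqueNum - 1) := Finset.sum_le_sum hu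
    _ = (G.cliqueNum - 1) * A.card := by rw [Finset.sum_const, smul_eq_mul, mul_comm]
  have hkR : (0:ℝ) < (k:ℝ) := by exact_mod_cast hk
  have main : ((secondNbhd G v).ncard : ℝ) ≤
      ((G.cliqueNum : ℝ) - 1) * (G.neighborSet v).ncard / k := by
    rw [hAcard, hBcard, le_div_iff₀ hkR]
    have : ((k * B.card : ℕ) : ℝ) ≤ (((G.cliqueNum - 1) * A.card : ℕ) : ℝ) := by
      exact_mod_cast key
    push_cast at this
    rw [Nat.cast_sub hω] at this
    · push_cast at this; linarith
  refine ⟨main, ?_⟩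
  -- sqDeg = deg + |N²|
  have hsq : (square G).neighborSet v = G.neighborSet v ∪ secondNbhd G v := by
    ext w
    simp only [neighborSet, square, Set.mem_setOf_eq, Set.mem_union, secondNbhd]
    constructor
    · rintro ⟨hne, h | ⟨x, hx1, hx2⟩⟩
      · exact Or.inl h
      · by_cases hvw : G.Adj v w
        · exact Or.inl hvw
        · exact Or.inr ⟨fun h => hne h.symm, hvw, x, hx1, hx2⟩
    · rintro (h | ⟨hne, hnadj, x, hx1, hx2⟩)
      · exact ⟨h.ne, Or.inl h⟩
      · exact ⟨fun h => hne h.symm, Or.inr ⟨x, hx1, hx2⟩⟩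
  have hdisj : Disjoint (G.neighborSet v) (secondNbhd G v) := by
    rw [Set.disjoint_left]
    rintro w hw ⟨_, hnadj, _⟩
    exact hnadj hw
  have hsqcard : sqDeg G v = (G.neighborSet v).ncard + (secondNbhd G v).ncard := by
    rw [sqDeg, hsq, Set.ncard_union_eq hdisj (Set.toFinite _) (Set.toFinite _)]
  have hdeg0 : (0:ℝ) ≤ (G.neighborSet v).ncard := by positivity
  rw [hsqcard]
  push_cast
  have : ((G.cliqueNum : ℝ) - 1) * (G.neighborSet v).ncard / k =
      ((G.cliqueNum : ℝ) - 1) / k * (G.neighborSet v).ncard := by ring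
  nlinarith [main]
end
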